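/- A quad code C ⊆ Z_2^ℓ of dimension k (every codeword of even weight, minimum nonzero weight at least 4) is realizable by a sequence of ℓ pairwise distinct cards in Z_2^n if and only if n ≥ ℓ - k - 1. -/

import Mathlib

lemma zmod2_ne_zero (x : ZMod 2) (h : x ≠ 0) : x = 1 := by
  revert h; revert x; decide

open Finset in
lemma even_hammingNorm_iff {ℓ : ℕ} (c : Fin ℓ → ZMod 2) :
    Even (hammingNorm c) ↔ ∑ i, c i = 0 := by
  have h : ∑ i, c i = (hammingNorm c : ZMod 2) := by
    unfold hammingNorm
    rw [← Finset.sum_filter_ne_zero]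
    rw [Finset.sum_congr rfl (fun i hi => zmod2_ne_zero _ (Finset.mem_filter.mp hi).2),
      Finset.sum_const, nsmul_eq_mul, mul_one]
  rw [h, ZMod.natCast_eq_zero_iff, Nat.even_iff, Nat.dvd_iff_mod_eq_zero]

lemma constr_injective {K M M' : Type*} [Field K] [AddCommGroup M] [Module K M]
    [AddCommGroup M'] [Module K M'] {ι : Type*} (b : Module.Basis ι K M) {w : ι → M'}
    (hw : LinearIndependent K w) : Function.Injective (b.constr K w) := by
  have hc : ∀ x, b.constr K w x = Finsupp.linearCombination K w (b.repr x) := by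
    intro x
    rw [Module.Basis.constr_apply, Finsupp.linearCombination_apply]
  intro x y hxy
  rw [hc, hc] at hxy
  have h0 : Finsupp.linearCombination K w (b.repr x - b.repr y) = 0 := by
    rw [map_sub, hxy, sub_self]
  exact b.repr.injective (sub_eq_zero.mp (linearIndependent_iff.mp hw _ h0))

set_option maxHeartbeats 1000000 in
set_option synthInstance.maxHeartbeats 400000 in
/-- A quad code of length ℓ and dimension k is realizable by distinct cards in
Z₂ⁿ iff n ≥ ℓ - k - 1. -/
theorem quad_code_realizable_iff (ℓ n k : ℕ) (hℓ : 0 < ℓ)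
    (C : Submodule (ZMod 2) (Fin ℓ → ZMod 2))
    (hk : Module.finrank (ZMod 2) C = k)
    (heven : ∀ c ∈ C, Even (hammingNorm c))
    (hmin : ∀ c ∈ C, c ≠ 0 → 4 ≤ hammingNorm c) :
    (∃ a : Fin ℓ → (Fin n → ZMod 2), Function.Injective a ∧
        ∀ c : Fin ℓ → ZMod 2,
          c ∈ C ↔ (Even (hammingNorm c) ∧ ∑ i, c i • a i = 0)) ↔
      n ≥ ℓ - k - 1 := by
  classical
  let p : (Fin ℓ → ZMod 2) →ₗ[ZMod 2] ZMod 2 := ∑ i, LinearMap.proj i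
  have hp : ∀ c, p c = ∑ i, c i := fun c => by
    simp [p, LinearMap.sum_apply]
  have hVrank : Module.finrank (ZMod 2) (Fin ℓ → ZMod 2) = ℓ := Module.finrank_fin_fun (ZMod 2)
  constructor
  · rintro ⟨a, -, hreal⟩
    let ψ : (Fin ℓ → ZMod 2) →ₗ[ZMod 2] (Fin n → ZMod 2) :=
      ∑ i, (LinearMap.proj i).smulRight (a i)
    have hψ : ∀ c, ψ c = ∑ i, c i • a i := fun c => by
      simp [ψ, LinearMap.sum_apply]
    let Φ := p.prod ψ
    have hker : LinearMap.ker Φ = C := by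
      ext c
      rw [LinearMap.mem_ker, hreal c, even_hammingNorm_iff]
      constructor
      · intro h
        have h1 : p c = 0 ∧ ψ c = 0 := by
          constructor
          · exact congrArg Prod.fst h
          · exact congrArg Prod.snd h
        rw [← hp, ← hψ]; exact h1
      · rintro ⟨h1, h2⟩
        have : Φ c = (p c, ψ c) := rfl
        rw [this, hp, hψ, h1, h2]; rfl
    have h1 := LinearMap.finrank_range_add_finrank_ker Φ
    rw [hker, hk, hVrank] at h1
    have h2 : Module.finrank (ZMod 2) (LinearMap.range Φ) ≤ 1 + n := by
      have h3 := Submodule.finrank_le (LinearMap.range Φ)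
      rwa [Module.finrank_prod, Module.finrank_self, Module.finrank_fin_fun (ZMod 2)] at h3
    omega
  · intro hn
    set W := LinearMap.ker p with hWdef
    have hCW : C ≤ W := fun c hc => by
      rw [LinearMap.mem_ker, hp, ← even_hammingNorm_iff]; exact heven c hc
    -- finrank W = ℓ - 1
    have hpsurj : Function.Surjective p := by
      intro y
      refine ⟨y • Pi.single ⟨0, hℓ⟩ 1, ?_⟩
      rw [map_smul, hp]
      simp [Pi.single_apply, smul_eq_mul]
    have hWrank : Module.finrank (ZMod 2) W + 1 = ℓ := by
      have h1 := LinearMap.finrank_range_add_finrank_ker p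
      rw [LinearMap.range_eq_top.mpr hpsurj, finrank_top, Module.finrank_self, hVrank,
        ← hWdef] at h1
      omega
    -- the image of W in the quotient
    let W' := W.map C.mkQ
    have hW'rank : Module.finrank (ZMod 2) W' + k ≤ ℓ - 1 := by
      let r : W →ₗ[ZMod 2] ((Fin ℓ → ZMod 2) ⧸ C) := C.mkQ ∘ₗ W.subtype
      have hrange : LinearMap.range r = W' := by
        rw [LinearMap.range_comp, Submodule.range_subtype]
      have hkerge : Module.finrank (ZMod 2) (LinearMap.ker r) ≥ k := by
        have hsub : C.comap W.subtype ≤ LinearMap.ker r := by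
          intro x hx
          simp only [LinearMap.mem_ker, r, LinearMap.comp_apply]
          exact (Submodule.Quotient.mk_eq_zero C).mpr hx
        have := Submodule.finrank_mono hsub
        rwa [(Submodule.comapSubtypeEquivOfLe hCW).finrank_eq, hk] at this
      have h1 := LinearMap.finrank_range_add_finrank_ker r
      rw [hrange] at h1
      omega
    have hW'n : Module.finrank (ZMod 2) W' ≤ n := by omega
    -- injective linear map from W' into Fin n → ZMod 2
    let b := Module.finBasis (ZMod 2) W'
    let w : Fin (Module.finrank (ZMod 2) W') → (Fin n → ZMod 2) :=
      fun i => Pi.single (Fin.castLE hW'n i) 1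
    have hw : LinearIndependent (ZMod 2) w := by
      have h1 : w = (Pi.basisFun (ZMod 2) (Fin n)) ∘ Fin.castLE hW'n := by
        funext i; simp [w]
      rw [h1]
      exact (Pi.basisFun (ZMod 2) (Fin n)).linearIndependent.comp _ (Fin.castLE_injective hW'n)
    let j := b.constr (ZMod 2) w
    have hj : Function.Injective j := constr_injective b hw
    obtain ⟨P, hP⟩ := Submodule.exists_isCompl W'
    let π := W'.linearProjOfIsCompl P hP
    let g := (j ∘ₗ π) ∘ₗ C.mkQ
    have hsingle : ∀ i : Fin ℓ, (fun j => if i = j then (1 : ZMod 2) else 0) = Pi.single i 1 := by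
      intro i; funext j'; simp [Pi.single_apply, eq_comm]
    have hga : ∀ c : Fin ℓ → ZMod 2, ∑ i, c i • g (Pi.single i 1) = g c := by
      intro c
      have h := (LinearMap.pi_apply_eq_sum_univ g c).symm
      simpa only [hsingle] using h
    have hreal : ∀ c, c ∈ C ↔ Even (hammingNorm c) ∧ g c = 0 := by
      intro c
      constructor
      · intro hc
        refine ⟨heven c hc, ?_⟩
        have h0 : C.mkQ c = 0 := by
          rw [Submodule.mkQ_apply]
          exact (Submodule.Quotient.mk_eq_zero C).mpr hc
        simp only [g, LinearMap.comp_apply, h0, map_zero]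
      · rintro ⟨he, hz⟩
        have hcW : c ∈ W := by
          rw [hWdef, LinearMap.mem_ker, hp, ← even_hammingNorm_iff]; exact he
        have hmem : C.mkQ c ∈ W' := Submodule.mem_map_of_mem hcW
        have hπ : π (C.mkQ c) = ⟨C.mkQ c, hmem⟩ :=
          Submodule.linearProjOfIsCompl_apply_left hP ⟨_, hmem⟩
        have hjz : j (⟨C.mkQ c, hmem⟩ : W') = 0 := by
          have hgc : g c = j (π (C.mkQ c)) := rfl
          rw [hgc, hπ] at hz
          exact hz
        have h0 : (⟨C.mkQ c, hmem⟩ : W') = 0 := hj (by rw [hjz, map_zero])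
        have h1 : C.mkQ c = 0 := congrArg Subtype.val h0
        rw [Submodule.mkQ_apply] at h1
        exact (Submodule.Quotient.mk_eq_zero C).mp h1
    refine ⟨fun i => g (Pi.single i 1), ?_, fun c => by rw [hga c]; exact hreal c⟩
    intro i i' hii'
    by_contra hne
    set c : Fin ℓ → ZMod 2 := Pi.single i 1 - Pi.single i' 1 with hcdef
    have hgc : g c = 0 := by
      rw [hcdef, map_sub, show g (Pi.single i 1) = g (Pi.single i' 1) from hii', sub_self]
    have hce : Even (hammingNorm c) := by
      rw [even_hammingNorm_iff, hcdef]
      simp [Finset.sum_sub_distrib, Finset.sum_pi_single']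
    have hcC : c ∈ C := (hreal c).mpr ⟨hce, hgc⟩
    have hc0 : c ≠ 0 := by
      intro h0
      have := congrFun h0 i
      simp [hcdef, Pi.single_apply, Ne.symm hne] at this
    have h4 := hmin c hcC hc0
    have hle : hammingNorm c ≤ 2 := by
      unfold hammingNorm
      have hsub : (Finset.univ.filter (fun l => c l ≠ 0)) ⊆ ({i, i'} : Finset (Fin ℓ)) := by
        intro l hl
        simp only [Finset.mem_filter] at hl
        by_contra hli
        simp only [Finset.mem_insert, Finset.mem_singleton, not_or] at hli
        apply hl.2
        rw [hcdef]
        simp [Pi.single_apply, Ne.symm hli.1, Ne.symm hli.2]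
      refine le_trans (Finset.card_le_card hsub) ?_
      exact le_trans (Finset.card_insert_le _ _) (by simp)
    omega
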